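/- arXiv:2105.04347 — 3 statements merged into one kernel-verified Lean document; each statement's English description precedes it below -/
import Mathlib

section
/- Let k be a field of characteristic 2, V a 2n-dimensional k-vector space with basis v_1,...,v_{2n} and alternating form B given by B(v_i, v_{n+i}) = B(v_{n+i}, v_i) = 1 and B(v_i, v_j) = 0 otherwise. Let 0 < l < n/2 and e = E_{l,n+l} + Σ_{i=1}^{n-1} (E_{i,i+1} + E_{n+i+1,n+i}). Then l = min{ m ≥ 0 : B(e^{m+1}(v), e^m(v)) = 0 for all v ∈ V }. In particular, B(e^{l+1}(v), e^l(v)) = 0 for every v ∈ V, while for each j < l there exists v ∈ V with B(e^{j+1}(v), e^j(v)) ≠ 0. -/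
open Matrix Finset

theorem stmt_2 (k : Type*) [Field k] [CharP k 2] (n l : ℕ) (hn : 2 ≤ n)
    (hl0 : 0 < l) (hln : 2*l < n) :
    let B : (Fin (2*n) → k) → (Fin (2*n) → k) → k := fun v w =>
      v ⬝ᵥ ((fun i j : Fin (2*n) => if i.1 + n = j.1 ∨ j.1 + n = i.1 then (1:k) else 0) *ᵥ w)
    let e : Matrix (Fin (2*n)) (Fin (2*n)) k :=
      Matrix.single ⟨l-1, by omega⟩ ⟨n+l-1, by omega⟩ 1 +
      ∑ i : Fin (n-1),
        (Matrix.single ⟨i.1, by have := i.2; omega⟩ ⟨i.1+1, by have := i.2; omega⟩ 1 +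
         Matrix.single ⟨n+i.1+1, by have := i.2; omega⟩ ⟨n+i.1, by have := i.2; omega⟩ 1)
    IsLeast {m : ℕ | ∀ v : Fin (2*n) → k, B ((e ^ (m+1)) *ᵥ v) ((e ^ m) *ᵥ v) = 0} l ∧
    (∀ v : Fin (2*n) → k, B ((e ^ (l+1)) *ᵥ v) ((e ^ l) *ᵥ v) = 0) ∧
    (∀ j < l, ∃ v : Fin (2*n) → k, B ((e ^ (j+1)) *ᵥ v) ((e ^ j) *ᵥ v) ≠ 0) := by
  intro B e
  -- extension of a vector to a ℕ-indexed function
  obtain ⟨Wf, hWf⟩ : ∃ F : (Fin (2*n) → k) → ℕ → k,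
      ∀ w j (h : j < 2*n), F w j = w ⟨j, h⟩ :=
    ⟨fun w j => if h : j < 2*n then w ⟨j, h⟩ else 0, fun w j h => by simp [h]⟩
  -- basic mulVec computations
  have sbm : ∀ (a b : Fin (2*n)) (w : Fin (2*n) → k) (r : Fin (2*n)),
      (Matrix.single a b (1:k) *ᵥ w) r = if r = a then w b else 0 := by
    intro a b w r
    simp only [mulVec, dotProduct, Matrix.single, of_apply, ite_mul, one_mul, zero_mul]
    by_cases h : a = r
    · subst h; simp [Finset.sum_ite_eq]
    · simp [h, Ne.symm h]
  have sumv : ∀ (A : Fin (n-1) → Matrix (Fin (2*n)) (Fin (2*n)) k) (w : Fin (2*n) → k)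
      (r : Fin (2*n)), ((∑ i, A i) *ᵥ w) r = ∑ i, (A i *ᵥ w) r := by
    intro A w r
    simp only [mulVec, dotProduct, Matrix.sum_apply, Finset.sum_mul]
    rw [Finset.sum_comm]
  -- formula for (e *ᵥ w) r
  have eappW : ∀ (w : Fin (2*n) → k) (r : Fin (2*n)), (e *ᵥ w) r =
      (if r.1 = l-1 then Wf w (n+l-1) else 0) +
      ((if r.1+1 < n then Wf w (r.1+1) else 0) +
       (if n+1 ≤ r.1 then Wf w (r.1-1) else 0)) := by
    intro w r
    simp only [e]
    rw [Matrix.add_mulVec, Pi.add_apply, sbm, sumv]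
    congr 1
    · by_cases h : r.1 = l-1
      · rw [if_pos (Fin.ext h : r = ⟨l-1, by omega⟩), if_pos h, hWf w (n+l-1) (by omega)]
      · rw [if_neg (fun hh => h (by rw [hh])), if_neg h]
    · have hsum : ∀ i : Fin (n-1),
          ((Matrix.single (⟨i.1, by have := i.2; omega⟩ : Fin (2*n))
              ⟨i.1+1, by have := i.2; omega⟩ 1 +
            Matrix.single ⟨n+i.1+1, by have := i.2; omega⟩
              ⟨n+i.1, by have := i.2; omega⟩ 1) *ᵥ w) r =
          (if r.1 = i.1 then Wf w (i.1+1) else 0) +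
          (if r.1 = n+i.1+1 then Wf w (n+i.1) else 0) := by
        intro i
        rw [Matrix.add_mulVec, Pi.add_apply, sbm, sbm]
        congr 1
        · by_cases h : r.1 = i.1
          · rw [if_pos (Fin.ext h), if_pos h, hWf w (i.1+1) (by have := i.2; omega)]
          · rw [if_neg (fun hh => h (congrArg Fin.val hh)), if_neg h]
        · by_cases h : r.1 = n+i.1+1
          · rw [if_pos (Fin.ext h), if_pos h, hWf w (n+i.1) (by have := i.2; omega)]
          · rw [if_neg (fun hh => h (congrArg Fin.val hh)), if_neg h]
      rw [Finset.sum_congr rfl fun i _ => hsum i, Finset.sum_add_distrib]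
      congr 1
      · -- top shift sum
        by_cases hr : r.1 + 1 < n
        · rw [if_pos hr]
          rw [Finset.sum_eq_single (⟨r.1, by omega⟩ : Fin (n-1))]
          · rw [if_pos (by simp only [Fin.val_mk])]
          · intro i _ hne
            refine if_neg (fun hh => hne (Fin.ext ?_))
            simp only [Fin.val_mk]
            omega
          · intro h; exact absurd (Finset.mem_univ _) h
        · rw [if_neg hr]
          refine Finset.sum_eq_zero fun i _ => ?_
          exact if_neg (fun hh => hr (by have := i.2; omega))
      · -- bottom shift sum
        by_cases hr : n + 1 ≤ r.1
        · rw [if_pos hr]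
          rw [Finset.sum_eq_single (⟨r.1-n-1, by have := r.2; omega⟩ : Fin (n-1))]
          · rw [if_pos (by simp only [Fin.val_mk]; omega)]
            simp only [Fin.val_mk]
            congr 1
            omega
          · intro i _ hne
            refine if_neg (fun hh => hne (Fin.ext ?_))
            simp only [Fin.val_mk]
            omega
          · intro h; exact absurd (Finset.mem_univ _) h
        · rw [if_neg hr]
          refine Finset.sum_eq_zero fun i _ => ?_
          exact if_neg (fun hh => hr (by omega))
  -- formula for the pairing matrix applied to w
  have Japp : ∀ (w : Fin (2*n) → k) (i : Fin (2*n)),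
      ((fun i j : Fin (2*n) => if i.1 + n = j.1 ∨ j.1 + n = i.1 then (1:k) else 0) *ᵥ w) i =
      if i.1 < n then Wf w (i.1+n) else Wf w (i.1-n) := by
    intro w i
    simp only [mulVec, dotProduct, ite_mul, one_mul, zero_mul]
    by_cases h : i.1 < n
    · rw [if_pos h]
      rw [Finset.sum_eq_single (⟨i.1+n, by omega⟩ : Fin (2*n))]
      · rw [if_pos (Or.inl (by simp only [Fin.val_mk])), hWf w (i.1+n) (by omega)]
      · intro j _ hne
        refine if_neg (fun hc => ?_)
        rcases hc with hc | hc
        · exact hne (Fin.ext (by simp only [Fin.val_mk]; omega))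
        · omega
      · intro h; exact absurd (Finset.mem_univ _) h
    · rw [if_neg h]
      rw [Finset.sum_eq_single (⟨i.1-n, by have := i.2; omega⟩ : Fin (2*n))]
      · rw [if_pos (Or.inr (by simp only [Fin.val_mk]; omega)),
          hWf w (i.1-n) (by have := i.2; omega)]
      · intro j _ hne
        refine if_neg (fun hc => ?_)
        rcases hc with hc | hc
        · omega
        · exact hne (Fin.ext (by simp only [Fin.val_mk]; omega))
      · intro h; exact absurd (Finset.mem_univ _) h
  -- transfer sums over Fin (2*n) to sums over range
  have fin2range : ∀ (g : Fin (2*n) → k),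
      ∑ i : Fin (2*n), g i = ∑ i ∈ range (2*n), if h : i < 2*n then g ⟨i, h⟩ else 0 := by
    intro g
    rw [← Fin.sum_univ_eq_sum_range (fun i => if h : i < 2*n then g ⟨i, h⟩ else 0) (2*n)]
    exact Finset.sum_congr rfl fun i _ => by simp [i.2]
  -- shift/drop lemmas for range sums
  have shift : ∀ f : ℕ → k, f 0 = 0 → ∑ i ∈ range n, f i = ∑ i ∈ range (n-1), f (i+1) := by
    intro f hf
    obtain ⟨m, rfl⟩ : ∃ m, n = m+1 := ⟨n-1, by omega⟩
    rw [Finset.sum_range_succ', hf, add_zero]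
    simp
  have drop : ∀ f : ℕ → k, f (n-1) = 0 → ∑ i ∈ range n, f i = ∑ i ∈ range (n-1), f i := by
    intro f hf
    obtain ⟨m, rfl⟩ : ∃ m, n = m+1 := ⟨n-1, by omega⟩
    simp only [Nat.add_sub_cancel] at hf ⊢
    rw [Finset.sum_range_succ, hf, add_zero]
  -- the key quadratic form computation
  have Bform : ∀ w : Fin (2*n) → k,
      B (e *ᵥ w) w = Wf w (n+l-1) * Wf w (n+l-1) := by
    intro w
    simp only [B]
    rw [dotProduct]
    calc ∑ i : Fin (2*n), (e *ᵥ w) i *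
          ((fun i j : Fin (2*n) => if i.1 + n = j.1 ∨ j.1 + n = i.1 then (1:k) else 0) *ᵥ w) i
        = ∑ i ∈ range (2*n),
            ((if i = l-1 then Wf w (n+l-1) else 0) +
             ((if i+1 < n then Wf w (i+1) else 0) +
              (if n+1 ≤ i then Wf w (i-1) else 0))) *
            (if i < n then Wf w (i+n) else Wf w (i-n)) := by
          rw [fin2range]
          refine Finset.sum_congr rfl fun i hi => ?_
          rw [Finset.mem_range] at hi
          rw [dif_pos hi, eappW, Japp]
      _ = Wf w (n+l-1) * Wf w (n+l-1) := by
          rw [two_mul, Finset.sum_range_add]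
          have htop : ∑ i ∈ range n,
              ((if i = l-1 then Wf w (n+l-1) else 0) +
               ((if i+1 < n then Wf w (i+1) else 0) +
                (if n+1 ≤ i then Wf w (i-1) else 0))) *
              (if i < n then Wf w (i+n) else Wf w (i-n)) =
              Wf w (n+l-1) * Wf w (n+l-1) +
              ∑ i ∈ range (n-1), Wf w (i+1) * Wf w (i+n) := by
            calc ∑ i ∈ range n,
                ((if i = l-1 then Wf w (n+l-1) else 0) +
                 ((if i+1 < n then Wf w (i+1) else 0) +
                  (if n+1 ≤ i then Wf w (i-1) else 0))) *
                (if i < n then Wf w (i+n) else Wf w (i-n))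
                = ∑ i ∈ range n,
                ((if i = l-1 then Wf w (n+l-1) * Wf w (i+n) else 0) +
                 (if i+1 < n then Wf w (i+1) * Wf w (i+n) else 0)) := by
                  refine Finset.sum_congr rfl fun i hi => ?_
                  rw [Finset.mem_range] at hi
                  rw [if_pos hi, if_neg (show ¬ n+1 ≤ i by omega)]
                  split_ifs <;> ring
              _ = Wf w (n+l-1) * Wf w (n+l-1) +
                  ∑ i ∈ range (n-1), Wf w (i+1) * Wf w (i+n) := by
                  rw [Finset.sum_add_distrib, Finset.sum_ite_eq' (range n) (l-1)
                    (fun i => Wf w (n+l-1) * Wf w (i+n)),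
                    if_pos (Finset.mem_range.mpr (by omega))]
                  congr 1
                  · rw [show l-1+n = n+l-1 from by omega]
                  · rw [drop _ (by rw [if_neg (by omega)])]
                    refine Finset.sum_congr rfl fun i hi => ?_
                    rw [Finset.mem_range] at hi
                    rw [if_pos (by omega)]
          have hbot : ∑ i ∈ range n,
              ((if n+i = l-1 then Wf w (n+l-1) else 0) +
               ((if n+i+1 < n then Wf w (n+i+1) else 0) +
                (if n+1 ≤ n+i then Wf w (n+i-1) else 0))) *
              (if n+i < n then Wf w (n+i+n) else Wf w (n+i-n)) =
              ∑ i ∈ range (n-1), Wf w (i+1) * Wf w (i+n) := by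
            calc ∑ i ∈ range n,
                ((if n+i = l-1 then Wf w (n+l-1) else 0) +
                 ((if n+i+1 < n then Wf w (n+i+1) else 0) +
                  (if n+1 ≤ n+i then Wf w (n+i-1) else 0))) *
                (if n+i < n then Wf w (n+i+n) else Wf w (n+i-n))
                = ∑ i ∈ range n, (if 1 ≤ i then Wf w (n+i-1) * Wf w i else 0) := by
                  refine Finset.sum_congr rfl fun i hi => ?_
                  rw [Finset.mem_range] at hi
                  rw [if_neg (show ¬ n+i = l-1 by omega),
                    if_neg (show ¬ n+i+1 < n by omega),
                    if_neg (show ¬ n+i < n by omega),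
                    show n+i-n = i from by omega]
                  by_cases h1 : 1 ≤ i
                  · rw [if_pos (show n+1 ≤ n+i by omega), if_pos h1]; ring
                  · rw [if_neg (show ¬ n+1 ≤ n+i by omega), if_neg h1]; ring
              _ = ∑ i ∈ range (n-1), Wf w (i+1) * Wf w (i+n) := by
                  rw [shift _ (by rw [if_neg (by omega)])]
                  refine Finset.sum_congr rfl fun i hi => ?_
                  rw [Finset.mem_range] at hi
                  rw [if_pos (by omega), show n+(i+1)-1 = i+n from by omega, mul_comm]
          rw [htop, hbot]
          have hc : (∑ i ∈ range (n-1), Wf w (i+1) * Wf w (i+n)) +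
              (∑ i ∈ range (n-1), Wf w (i+1) * Wf w (i+n)) = 0 :=
            CharTwo.add_self_eq_zero _
          linear_combination hc
  -- bottom components of e^m *ᵥ v are pure shifts
  have bot : ∀ m (v : Fin (2*n) → k) (r : Fin (2*n)), n ≤ r.1 →
      (e ^ m *ᵥ v) r = if m + n ≤ r.1 then Wf v (r.1-m) else 0 := by
    intro m
    induction m with
    | zero =>
      intro v r hr
      rw [pow_zero, one_mulVec, if_pos (by omega), Nat.sub_zero, hWf v r.1 r.2]
    | succ m ih =>
      intro v r hr
      rw [pow_succ', ← mulVec_mulVec, eappW]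
      rw [if_neg (show ¬ r.1 = l-1 by omega), if_neg (show ¬ r.1+1 < n by omega)]
      by_cases h1 : n+1 ≤ r.1
      · rw [if_pos h1, hWf _ (r.1-1) (by have := r.2; omega)]
        have h2 := ih v (⟨r.1-1, by have := r.2; omega⟩ : Fin (2*n))
          (show n ≤ r.1-1 by omega)
        simp only [Fin.val_mk] at h2
        rw [h2]
        by_cases hm : m+1+n ≤ r.1
        · rw [if_pos (show m+n ≤ r.1-1 by omega), if_pos hm,
            show r.1-1-m = r.1-(m+1) from by omega]
          ring
        · rw [if_neg (show ¬ m+n ≤ r.1-1 by omega), if_neg hm]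
          ring
      · rw [if_neg h1, if_neg (show ¬ m+1+n ≤ r.1 by omega)]
        ring
  -- the main formula
  have main : ∀ m (v : Fin (2*n) → k),
      B (e ^ (m+1) *ᵥ v) (e ^ m *ᵥ v) =
      (if m < l then Wf v (n+l-1-m) else 0) * (if m < l then Wf v (n+l-1-m) else 0) := by
    intro m v
    have hpf : n+l-1 < 2*n := by omega
    rw [pow_succ', ← mulVec_mulVec, Bform (e ^ m *ᵥ v), hWf _ (n+l-1) hpf,
      bot m v ⟨n+l-1, hpf⟩ (show n ≤ n+l-1 by omega)]
    simp only [Fin.val_mk]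
    by_cases hm : m < l
    · rw [if_pos (show m+n ≤ n+l-1 by omega), if_pos hm]
    · rw [if_neg (show ¬ m+n ≤ n+l-1 by omega), if_neg hm]
  have hzero : ∀ m, l ≤ m → ∀ v : Fin (2*n) → k,
      B (e ^ (m+1) *ᵥ v) (e ^ m *ᵥ v) = 0 := by
    intro m hm v
    rw [main m v, if_neg (by omega), mul_zero]
  have hone : ∀ m, m < l →
      B (e ^ (m+1) *ᵥ (fun _ => (1:k))) (e ^ m *ᵥ (fun _ => (1:k))) ≠ 0 := by
    intro m hm
    rw [main m (fun _ => 1), if_pos hm, hWf _ _ (by omega)]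
    simp
  refine ⟨⟨fun v => hzero l le_rfl v, ?_⟩, fun v => hzero l le_rfl v, ?_⟩
  · intro m hm
    by_contra hlt
    push_neg at hlt
    exact hone m hlt (hm (fun _ => 1))
  · intro j hj
    exact ⟨fun _ => 1, hone j hj⟩
end

section
/- Let k be a field of characteristic 2, n ≥ 4, and V a 2n-dimensional k-vector space with basis v_1,...,v_{2n}. Fix l with (n+1)/2 < l ≤ n and let u be the endomorphism of V determined by: u(v_i) = v_i + v_{i-1} + ... + v_1 for 1 ≤ i ≤ n; u(v_j) = v_j + v_{j+1} for n+1 ≤ j < 2n with j ≠ 2l-1; u(v_{2l-1}) = v_{2l-1} + v_{2l} + v_n + v_{n-1} + ... + v_1; and u(v_{2n}) = v_{2n} + v_{2l-n-1} + v_{2l-n-2} + ... + v_1. Then u is invertible, the fixed-point space of u is the 2-dimensional subspace spanned by v_1 and v_{2l-n} + v_{2n}, and (u - 1)^{2l-2} = 0 while (u - 1)^{2l-3} ≠ 0. Consequently, u is unipotent with exactly two Jordan blocks, of sizes 2l - 2 and 2n - 2l + 2. -/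
open Matrix Finset

set_option maxHeartbeats 2000000

namespace SFive

/-- transpose of `U - 1` as an explicit ℕ-matrix -/
def Am (n l : ℕ) : Matrix (Fin (2*n)) (Fin (2*n)) ℕ := fun i j =>
  if j.1 < n then
    (if j.1 < i.1 ∧ i.1 < n then 1 else 0) + (if i.1 = 2*l-2 then 1 else 0)
      + (if i.1 = 2*n-1 ∧ j.1 ≤ 2*l-n-2 then 1 else 0)
  else if i.1 + 1 = j.1 ∧ n ≤ i.1 then 1 else 0

/-- closed formula for `Am ^ r`, `r ≥ 1` -/
def Fm (n l r : ℕ) : Matrix (Fin (2*n)) (Fin (2*n)) ℕ := fun i j =>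
  if i.1 < n then (if j.1 < i.1 then (i.1 - j.1 - 1).choose (r-1) else 0)
  else if j.1 < n then
    (if i.1 ≤ 2*l-2 ∧ 2*l ≤ i.1 + r + 1 then (n - j.1 - 1).choose (i.1+r+1-2*l) else 0)
    + (if 2*n ≤ i.1 + r ∧ j.1 ≤ 2*l-n-2 then ((2*l-n-1) - j.1 - 1).choose (i.1+r-2*n) else 0)
  else if i.1 + r = j.1 then 1 else 0

lemma ico_choose (b : ℕ) : ∀ d a : ℕ, ∑ t ∈ Ico a (a+d), ((a+d) - t - 1).choose b = d.choose (b+1) := by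
  intro d
  induction d with
  | zero => intro a; simp
  | succ d ih =>
    intro a
    rw [show a + (d+1) = (a+1) + d by omega,
      Finset.sum_eq_sum_Ico_succ_bot (by omega : a < a + 1 + d)]
    have h1 : ((a+1+d) - a - 1).choose b = d.choose b := by congr 1; omega
    rw [h1, ih (a+1)]
    exact (Nat.choose_succ_succ d b).symm

lemma hockeyA (N c j b : ℕ) (hc : c ≤ N) :
    ∑ t ∈ range N, (if j < t ∧ t < c then (c - t - 1).choose b else 0)
      = (c - j - 1).choose (b+1) := by
  rw [← Finset.sum_filter]
  have hf : filter (fun t => j < t ∧ t < c) (range N) = Ico (j+1) c := by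
    ext t; simp only [Finset.mem_filter, Finset.mem_range, Finset.mem_Ico]; omega
  rw [hf]
  rcases le_or_gt c (j+1) with h | h
  · rw [Finset.Ico_eq_empty (by omega)]
    rw [show c - j - 1 = 0 by omega]
    simp [Nat.choose_eq_zero_of_lt (Nat.succ_pos b)]
  · have h2 := ico_choose b (c - (j+1)) (j+1)
    rw [show (j+1) + (c - (j+1)) = c by omega] at h2
    rw [h2, Nat.sub_sub]


lemma sum_guard {M : Type*} [AddCommMonoid M] (N : ℕ) (P : Prop) [Decidable P] (f : ℕ → M) :
    ∑ t ∈ range N, (if P then f t else 0) = if P then ∑ t ∈ range N, f t else 0 := by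
  split_ifs <;> simp

lemma sum_pt {M : Type*} [AddCommMonoid M] (N c : ℕ) (f : ℕ → M) :
    ∑ t ∈ range N, (if t = c then f t else 0) = if c < N then f c else 0 := by
  rw [Finset.sum_ite_eq' (range N) c f]; simp [Finset.mem_range]

variable {n l : ℕ}

lemma step (hn : 4 ≤ n) (hl1 : n+1 < 2*l) (hl2 : l ≤ n) (r : ℕ) (hr : 1 ≤ r) :
    Fm n l r * Am n l = Fm n l (r+1) := by
  ext i j
  have hi2 := i.2
  have hj2 := j.2
  rw [mul_apply]
  rcases Nat.lt_or_ge i.1 n with hi | hi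
  · rcases Nat.lt_or_ge j.1 n with hj | hj
    · -- top-left
      rw [Finset.sum_congr rfl (fun t _ => (by
          have ht2 := t.2
          simp only [Fm, Am]
          split_ifs <;> first | rfl | omega | (ring_nf; omega) :
        Fm n l r i t * Am n l t j
          = (fun tv => if j.1 < tv ∧ tv < i.1 then (i.1 - tv - 1).choose (r-1) else 0) t.1)),
        Fin.sum_univ_eq_sum_range
          (fun tv => if j.1 < tv ∧ tv < i.1 then (i.1 - tv - 1).choose (r-1) else 0) (2*n),
        hockeyA (2*n) i.1 j.1 (r-1) (by omega)]
      simp only [Fm, if_pos hi]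
      rcases Nat.lt_or_ge j.1 i.1 with h | h
      · rw [if_pos h, show (r-1)+1 = (r+1)-1 by omega]
      · rw [if_neg (by omega), show i.1 - j.1 - 1 = 0 by omega]
        exact Nat.choose_eq_zero_of_lt (by omega)
    · -- i top, j bottom : zero
      rw [Finset.sum_congr rfl (fun t _ => (by
          have ht2 := t.2
          simp only [Fm, Am]
          split_ifs <;> first | rfl | omega | (ring_nf; omega) :
        Fm n l r i t * Am n l t j = 0))]
      simp only [Fm, if_pos hi, Finset.sum_const_zero]
      rw [if_neg (by omega)]
  · rcases Nat.lt_or_ge j.1 n with hj | hj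
    · -- i bottom, j top : main case
      rw [Finset.sum_congr rfl (fun t _ => (by
          have ht2 := t.2
          simp only [Fm, Am]
          split_ifs <;> first | rfl | omega | (ring_nf; omega) :
        Fm n l r i t * Am n l t j
          = (fun tv =>
            (if i.1 ≤ 2*l-2 ∧ 2*l ≤ i.1 + r + 1 then
                (if j.1 < tv ∧ tv < n then (n - tv - 1).choose (i.1+r+1-2*l) else 0) else 0)
            + (if 2*n ≤ i.1 + r then
                (if j.1 < tv ∧ tv < 2*l-n-1 then ((2*l-n-1) - tv - 1).choose (i.1+r-2*n) else 0) else 0)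
            + (if tv = 2*l-2 then (if i.1 + r = 2*l-2 then 1 else 0) else 0)
            + (if tv = 2*n-1 then (if i.1 + r = 2*n-1 ∧ j.1 ≤ 2*l-n-2 then 1 else 0) else 0)) t.1)),
        Fin.sum_univ_eq_sum_range (fun tv =>
            (if i.1 ≤ 2*l-2 ∧ 2*l ≤ i.1 + r + 1 then
                (if j.1 < tv ∧ tv < n then (n - tv - 1).choose (i.1+r+1-2*l) else 0) else 0)
            + (if 2*n ≤ i.1 + r then
                (if j.1 < tv ∧ tv < 2*l-n-1 then ((2*l-n-1) - tv - 1).choose (i.1+r-2*n) else 0) else 0)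
            + (if tv = 2*l-2 then (if i.1 + r = 2*l-2 then 1 else 0) else 0)
            + (if tv = 2*n-1 then (if i.1 + r = 2*n-1 ∧ j.1 ≤ 2*l-n-2 then 1 else 0) else 0)) (2*n)]
      rw [Finset.sum_add_distrib, Finset.sum_add_distrib, Finset.sum_add_distrib,
        sum_guard, sum_guard, sum_pt, sum_pt,
        hockeyA (2*n) n j.1 (i.1+r+1-2*l) (by omega),
        hockeyA (2*n) (2*l-n-1) j.1 (i.1+r-2*n) (by omega),
        if_pos (by omega : 2*l-2 < 2*n), if_pos (by omega : 2*n-1 < 2*n)]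
      simp only [Fm, if_neg (by omega : ¬ i.1 < n), if_pos hj]
      have e1 : (if i.1 ≤ 2*l-2 ∧ 2*l ≤ i.1 + (r+1) + 1 then
            (n - j.1 - 1).choose (i.1+(r+1)+1-2*l) else 0)
          = (if i.1 ≤ 2*l-2 ∧ 2*l ≤ i.1 + r + 1 then (n - j.1 - 1).choose (i.1+r+1-2*l+1) else 0)
            + (if i.1 + r = 2*l-2 then 1 else 0) := by
        by_cases h1 : 2*l ≤ i.1 + r + 1
        · rw [if_neg (show ¬ i.1 + r = 2*l-2 by omega), add_zero]
          by_cases h2 : i.1 ≤ 2*l-2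
          · rw [if_pos (show i.1 ≤ 2*l-2 ∧ 2*l ≤ i.1 + (r+1) + 1 from ⟨h2, by omega⟩),
              if_pos (show i.1 ≤ 2*l-2 ∧ 2*l ≤ i.1 + r + 1 from ⟨h2, h1⟩),
              show i.1+(r+1)+1-2*l = i.1+r+1-2*l+1 by omega]
          · rw [if_neg (show ¬ (i.1 ≤ 2*l-2 ∧ 2*l ≤ i.1 + (r+1) + 1) by omega),
              if_neg (show ¬ (i.1 ≤ 2*l-2 ∧ 2*l ≤ i.1 + r + 1) by omega)]
        · rw [if_neg (show ¬ (i.1 ≤ 2*l-2 ∧ 2*l ≤ i.1 + r + 1) by omega), zero_add]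
          by_cases h2 : i.1 + r = 2*l-2
          · rw [if_pos h2, if_pos (show i.1 ≤ 2*l-2 ∧ 2*l ≤ i.1 + (r+1) + 1 by omega),
              show i.1+(r+1)+1-2*l = 0 by omega, Nat.choose_zero_right]
          · rw [if_neg h2, if_neg (show ¬ (i.1 ≤ 2*l-2 ∧ 2*l ≤ i.1 + (r+1) + 1) by omega)]
      have e2 : (if 2*n ≤ i.1 + (r+1) ∧ j.1 ≤ 2*l-n-2 then
            ((2*l-n-1) - j.1 - 1).choose (i.1+(r+1)-2*n) else 0)
          = (if 2*n ≤ i.1 + r then ((2*l-n-1) - j.1 - 1).choose (i.1+r-2*n+1) else 0)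
            + (if i.1 + r = 2*n-1 ∧ j.1 ≤ 2*l-n-2 then 1 else 0) := by
        by_cases h1 : 2*n ≤ i.1 + r
        · rw [if_pos h1, if_neg (show ¬ (i.1 + r = 2*n-1 ∧ j.1 ≤ 2*l-n-2) by omega), add_zero]
          by_cases h2 : j.1 ≤ 2*l-n-2
          · rw [if_pos (show 2*n ≤ i.1 + (r+1) ∧ j.1 ≤ 2*l-n-2 from ⟨by omega, h2⟩),
              show i.1+(r+1)-2*n = i.1+r-2*n+1 by omega]
          · rw [if_neg (show ¬ (2*n ≤ i.1 + (r+1) ∧ j.1 ≤ 2*l-n-2) by omega),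
              show (2*l-n-1) - j.1 - 1 = 0 by omega]
            exact (Nat.choose_eq_zero_of_lt (by omega)).symm
        · rw [if_neg h1, zero_add]
          by_cases h2 : i.1 + r = 2*n-1 ∧ j.1 ≤ 2*l-n-2
          · rw [if_pos h2, if_pos (show 2*n ≤ i.1 + (r+1) ∧ j.1 ≤ 2*l-n-2 from ⟨by omega, h2.2⟩),
              show i.1+(r+1)-2*n = 0 by omega, Nat.choose_zero_right]
          · rw [if_neg h2, if_neg (show ¬ (2*n ≤ i.1 + (r+1) ∧ j.1 ≤ 2*l-n-2) by omega)]
      rw [e1, e2]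
      ring
    · -- i bottom, j bottom
      rw [Finset.sum_congr rfl (fun t _ => (by
          have ht2 := t.2
          simp only [Fm, Am]
          split_ifs <;> first | rfl | omega | (ring_nf; omega) :
        Fm n l r i t * Am n l t j
          = (fun tv => if tv = i.1 + r then (if tv + 1 = j.1 ∧ n ≤ tv then 1 else 0) else 0) t.1)),
        Fin.sum_univ_eq_sum_range (fun tv => if tv = i.1 + r then (if tv + 1 = j.1 ∧ n ≤ tv then 1 else 0) else 0) (2*n), sum_pt]
      simp only [Fm, if_neg (by omega : ¬ i.1 < n), if_neg (by omega : ¬ j.1 < n)]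
      split_ifs <;> omega

lemma fm_one (hn : 4 ≤ n) (hl1 : n+1 < 2*l) (hl2 : l ≤ n) : Fm n l 1 = Am n l := by
  ext i j
  have hi2 := i.2
  have hj2 := j.2
  simp only [Fm, Am]
  rcases Nat.lt_or_ge i.1 n with hi | hi
  · rw [if_pos hi]
    rcases Nat.lt_or_ge j.1 n with hj | hj
    · rw [if_pos hj, if_neg (show ¬ i.1 = 2*l-2 by omega),
        if_neg (show ¬ (i.1 = 2*n-1 ∧ j.1 ≤ 2*l-n-2) by omega), add_zero, add_zero]
      by_cases hji : j.1 < i.1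
      · rw [if_pos hji, if_pos ⟨hji, hi⟩]
        simp
      · rw [if_neg hji, if_neg (by omega)]
    · rw [if_neg (by omega), if_neg (by omega), if_neg (show ¬ (i.1+1 = j.1 ∧ n ≤ i.1) by omega)]
  · rw [if_neg (by omega)]
    rcases Nat.lt_or_ge j.1 n with hj | hj
    · rw [if_pos hj, if_pos hj, if_neg (show ¬ (j.1 < i.1 ∧ i.1 < n) by omega), zero_add]
      by_cases h22 : i.1 = 2*l-2
      · rw [if_pos (show i.1 ≤ 2*l-2 ∧ 2*l ≤ i.1+1+1 by omega),
          if_neg (show ¬ (2*n ≤ i.1 + 1 ∧ j.1 ≤ 2*l-n-2) by omega), if_pos h22,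
          if_neg (show ¬ (i.1 = 2*n-1 ∧ j.1 ≤ 2*l-n-2) by omega),
          show i.1+1+1-2*l = 0 by omega, Nat.choose_zero_right]
      · by_cases hlast : i.1 = 2*n-1 ∧ j.1 ≤ 2*l-n-2
        · rw [if_neg (show ¬ (i.1 ≤ 2*l-2 ∧ 2*l ≤ i.1+1+1) by omega),
            if_pos (show 2*n ≤ i.1 + 1 ∧ j.1 ≤ 2*l-n-2 by omega), if_neg h22, if_pos hlast,
            show i.1+1-2*n = 0 by omega, Nat.choose_zero_right]
        · rw [if_neg (show ¬ (i.1 ≤ 2*l-2 ∧ 2*l ≤ i.1+1+1) by omega),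
            if_neg (show ¬ (2*n ≤ i.1 + 1 ∧ j.1 ≤ 2*l-n-2) by omega), if_neg h22, if_neg hlast]
    · rw [if_neg (show ¬ j.1 < n by omega), if_neg (show ¬ j.1 < n by omega)]
      split_ifs <;> omega

lemma pow_eq (hn : 4 ≤ n) (hl1 : n+1 < 2*l) (hl2 : l ≤ n) (r : ℕ) (hr : 1 ≤ r) :
    Am n l ^ r = Fm n l r := by
  induction r, hr using Nat.le_induction with
  | base => rw [pow_one, fm_one hn hl1 hl2]
  | succ r hr ih => rw [pow_succ, ih, step hn hl1 hl2 r hr]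

lemma fm_final (hn : 4 ≤ n) (hl1 : n+1 < 2*l) (hl2 : l ≤ n) (i j : Fin (2*n)) :
    Fm n l (2*l-2) i j = if i.1 = n ∧ j.1 = 0 then 2 else 0 := by
  have hi2 := i.2
  have hj2 := j.2
  simp only [Fm]
  rcases Nat.lt_or_ge i.1 n with hi | hi
  · rw [if_pos hi, if_neg (show ¬ (i.1 = n ∧ j.1 = 0) by omega)]
    by_cases hji : j.1 < i.1
    · rw [if_pos hji]
      exact Nat.choose_eq_zero_of_lt (by omega)
    · rw [if_neg hji]
  · rw [if_neg (by omega)]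
    rcases Nat.lt_or_ge j.1 n with hj | hj
    · rw [if_pos hj]
      by_cases hij : i.1 = n ∧ j.1 = 0
      · rw [if_pos hij, if_pos (show i.1 ≤ 2*l-2 ∧ 2*l ≤ i.1 + (2*l-2) + 1 by omega),
          if_pos (show 2*n ≤ i.1 + (2*l-2) ∧ j.1 ≤ 2*l-n-2 by omega),
          show n - j.1 - 1 = n-1 by omega, show i.1 + (2*l-2) + 1 - 2*l = n-1 by omega,
          show (2*l-n-1) - j.1 - 1 = 2*l-n-2 by omega, show i.1 + (2*l-2) - 2*n = 2*l-n-2 by omega,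
          Nat.choose_self, Nat.choose_self]
      · rw [if_neg hij]
        have t1 : (if i.1 ≤ 2*l-2 ∧ 2*l ≤ i.1 + (2*l-2) + 1 then
            (n - j.1 - 1).choose (i.1 + (2*l-2) + 1 - 2*l) else 0) = 0 := by
          split_ifs with g
          · exact Nat.choose_eq_zero_of_lt (by omega)
          · rfl
        have t2 : (if 2*n ≤ i.1 + (2*l-2) ∧ j.1 ≤ 2*l-n-2 then
            ((2*l-n-1) - j.1 - 1).choose (i.1 + (2*l-2) - 2*n) else 0) = 0 := by
          split_ifs with g
          · exact Nat.choose_eq_zero_of_lt (by omega)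
          · rfl
        rw [t1, t2]
    · rw [if_neg (by omega), if_neg (show ¬ i.1 + (2*l-2) = j.1 by omega),
        if_neg (show ¬ (i.1 = n ∧ j.1 = 0) by omega)]

lemma fm_sub (hn : 4 ≤ n) (hl1 : n+1 < 2*l) (hl2 : l ≤ n) (i j : Fin (2*n))
    (hi : i.1 = n) (hj : j.1 = 0) : Fm n l (2*l-3) i j = 2*l-3 := by
  simp only [Fm]
  rw [if_neg (by omega), if_pos (by omega : j.1 < n),
    if_pos (show i.1 ≤ 2*l-2 ∧ 2*l ≤ i.1 + (2*l-3) + 1 by omega),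
    show n - j.1 - 1 = n-1 by omega, show i.1 + (2*l-3) + 1 - 2*l = n-2 by omega]
  have c1 : (n-1).choose (n-2) = n-1 := by
    rw [show n-2 = (n-1) - 1 by omega, Nat.choose_symm (by omega), Nat.choose_one_right]
  rw [c1]
  by_cases hc : 2*n ≤ i.1 + (2*l-3)
  · rw [if_pos ⟨hc, by omega⟩, show (2*l-n-1) - j.1 - 1 = 2*l-n-2 by omega,
      show i.1 + (2*l-3) - 2*n = 2*l-n-3 by omega]
    have c2 : (2*l-n-2).choose (2*l-n-3) = 2*l-n-2 := by
      rw [show 2*l-n-3 = (2*l-n-2) - 1 by omega, Nat.choose_symm (by omega),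
        Nat.choose_one_right]
    rw [c2]
    omega
  · rw [if_neg (by omega), add_zero]
    omega

variable (k : Type*) [Field k]

def Um (n l : ℕ) : Matrix (Fin (2*n)) (Fin (2*n)) k := fun i j =>
  if j.1 < n then (if i.1 ≤ j.1 then 1 else 0)
  else if j.1 = 2*l-2 then (if i.1 = 2*l-2 ∨ i.1 = 2*l-1 ∨ i.1 < n then 1 else 0)
  else if j.1 = 2*n-1 then (if i.1 = 2*n-1 ∨ i.1 ≤ 2*l-n-2 then 1 else 0)
  else (if i = j ∨ i.1 = j.1+1 then 1 else 0)

lemma ut (hn : 4 ≤ n) (hl1 : n+1 < 2*l) (hl2 : l ≤ n) :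
    (Um k n l)ᵀ - 1 = (Am n l).map (Nat.cast : ℕ → k) := by
  ext i j
  have hi2 := i.2
  have hj2 := j.2
  simp only [Matrix.sub_apply, Matrix.transpose_apply, Matrix.map_apply, Matrix.one_apply,
    Um, Am, Fin.ext_iff, Nat.cast_add, Nat.cast_ite, Nat.cast_one, Nat.cast_zero]
  split_ifs <;> first | omega | (exfalso; omega) | norm_num

lemma pow_t (hn : 4 ≤ n) (hl1 : n+1 < 2*l) (hl2 : l ≤ n) (r : ℕ) (hr : 1 ≤ r) :
    ((Um k n l - 1) ^ r)ᵀ = (Fm n l r).map (Nat.cast : ℕ → k) := by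
  rw [Matrix.transpose_pow, Matrix.transpose_sub, Matrix.transpose_one, ut k hn hl1 hl2]
  have h1 : (Am n l).map (Nat.cast : ℕ → k) = (Nat.castRingHom k).mapMatrix (Am n l) := rfl
  rw [h1, ← map_pow, pow_eq hn hl1 hl2 r hr]
  rfl

lemma vanish (hn : 4 ≤ n) (hl1 : n+1 < 2*l) (hl2 : l ≤ n) [CharP k 2] :
    (Um k n l - 1) ^ (2*l-2) = 0 := by
  rw [← Matrix.transpose_eq_zero, pow_t k hn hl1 hl2 (2*l-2) (by omega)]
  ext i j
  rw [Matrix.map_apply, fm_final hn hl1 hl2 i j]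
  simp only [Matrix.zero_apply]
  split_ifs
  · exact CharP.cast_eq_zero k 2
  · exact Nat.cast_zero

lemma nonvanish (hn : 4 ≤ n) (hl1 : n+1 < 2*l) (hl2 : l ≤ n) [CharP k 2] :
    (Um k n l - 1) ^ (2*l-3) ≠ 0 := by
  intro h
  have h2 := pow_t k hn hl1 hl2 (2*l-3) (by omega)
  rw [h, Matrix.transpose_zero] at h2
  have h3 := congrFun (congrFun h2.symm ⟨n, by omega⟩) ⟨0, by omega⟩
  rw [Matrix.map_apply, fm_sub hn hl1 hl2 _ _ rfl rfl] at h3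
  have h20 : (2 : k) = 0 := by exact_mod_cast CharP.cast_eq_zero k 2
  have h4 : ((2*l-3 : ℕ) : k) = 1 := by
    rw [show 2*l-3 = 2*(l-2)+1 by omega]
    push_cast
    rw [h20]
    ring
  rw [h4] at h3
  simp at h3

lemma unit_um (hn : 4 ≤ n) (hl1 : n+1 < 2*l) (hl2 : l ≤ n) [CharP k 2] :
    IsUnit (Um k n l) := by
  have hnil : IsNilpotent (Um k n l - 1) := ⟨2*l-2, vanish k hn hl1 hl2⟩
  have h := hnil.isUnit_one_add
  have he : (1 : Matrix (Fin (2*n)) (Fin (2*n)) k) + (Um k n l - 1) = Um k n l := by abel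
  rwa [he] at h

lemma fin_eq' {N b : ℕ} (m : Fin N) (hb : b < N) (h : m.1 = b) : m = (⟨b, hb⟩ : Fin N) :=
  Fin.ext h

lemma fin_ne' {N b : ℕ} (m : Fin N) (hb : b < N) (h : ¬ m.1 = b) : ¬ m = (⟨b, hb⟩ : Fin N) :=
  fun he => h (by rw [he])

lemma n_eq (hn : 4 ≤ n) (hl1 : n+1 < 2*l) (hl2 : l ≤ n) :
    Um k n l - 1 = ((Am n l).map (Nat.cast : ℕ → k))ᵀ := by
  rw [← ut k hn hl1 hl2, Matrix.transpose_sub, Matrix.transpose_transpose, Matrix.transpose_one]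

lemma ker_eq (hn : 4 ≤ n) (hl1 : n+1 < 2*l) (hl2 : l ≤ n) [CharP k 2] :
    LinearMap.ker (Um k n l - 1).mulVecLin
      = Submodule.span k {Pi.single (⟨0, (by omega : 0 < 2*n+0)⟩ : Fin (2*n)) (1:k),
          Pi.single (⟨2*l-n-1, (by omega : 2*l-n-1 < 2*n+0)⟩ : Fin (2*n)) (1:k)
            + Pi.single (⟨2*n-1, (by omega : 2*n-1 < 2*n+0)⟩ : Fin (2*n)) (1:k)} := by
  have h20 : (2:k) = 0 := by exact_mod_cast CharP.cast_eq_zero k 2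
  have hN : ∀ i jj : Fin (2*n), (Um k n l - 1) i jj = ((Am n l jj i : ℕ) : k) := by
    intro i jj
    rw [n_eq k hn hl1 hl2]
    rfl
  apply le_antisymm
  · intro x hx
    have hxe : ∀ i : Fin (2*n), ∑ jj : Fin (2*n), ((Am n l jj i : ℕ) : k) * x jj = 0 := by
      intro i
      have hx' : (Um k n l - 1).mulVecLin x = 0 := hx
      have h1 : ((Um k n l - 1) *ᵥ x) i = 0 := by simpa only [Matrix.mulVecLin_apply, Pi.zero_apply] using congrFun hx' i
      have hdef : ((Um k n l - 1) *ᵥ x) i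
          = ∑ jj : Fin (2*n), (Um k n l - 1) i jj * x jj := rfl
      calc ∑ jj : Fin (2*n), ((Am n l jj i : ℕ) : k) * x jj
          = ∑ jj : Fin (2*n), (Um k n l - 1) i jj * x jj :=
            Finset.sum_congr rfl (fun jj _ => by rw [hN])
        _ = 0 := by rw [← hdef, h1]
    have hmid : ∀ m : Fin (2*n), n ≤ m.1 → m.1 ≤ 2*n-2 → x m = 0 := by
      intro m hm1 hm2
      have h := hxe ⟨m.1+1, by omega⟩
      have hpt : ∀ jj : Fin (2*n), ((Am n l jj ⟨m.1+1, by omega⟩ : ℕ) : k) * x jj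
          = if jj = m then x jj else 0 := by
        intro jj
        have hj2 := jj.2
        simp only [Am, Fin.val_mk, Fin.ext_iff, Nat.cast_add, Nat.cast_ite, Nat.cast_one,
          Nat.cast_zero]
        split_ifs <;> first | (exfalso; omega) | ring
      rw [Finset.sum_congr rfl (fun jj _ => hpt jj), Finset.sum_ite_eq' Finset.univ m x] at h
      simpa using h
    have h22 : x ⟨2*l-2, by omega⟩ = 0 :=
      hmid ⟨2*l-2, by omega⟩ (show n ≤ 2*l-2 by omega) (show 2*l-2 ≤ 2*n-2 by omega)
    have hS : ∀ a : ℕ, a < n →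
        (∑ jj : Fin (2*n), if a < jj.1 ∧ jj.1 < n then x jj else 0)
          + (if a ≤ 2*l-n-2 then x ⟨2*n-1, by omega⟩ else 0) = 0 := by
      intro a ha
      have h := hxe ⟨a, by omega⟩
      have hpt : ∀ jj : Fin (2*n), ((Am n l jj ⟨a, by omega⟩ : ℕ) : k) * x jj
          = (if a < jj.1 ∧ jj.1 < n then x jj else 0)
            + ((if jj = (⟨2*l-2, by omega⟩ : Fin (2*n)) then x jj else 0)
            + (if jj = (⟨2*n-1, by omega⟩ : Fin (2*n)) then (if a ≤ 2*l-n-2 then x jj else 0)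
                else 0)) := by
        intro jj
        have hj2 := jj.2
        simp only [Am, Fin.val_mk, Fin.ext_iff, Nat.cast_add, Nat.cast_ite, Nat.cast_one,
          Nat.cast_zero]
        split_ifs <;> first | (exfalso; omega) | ring
      rw [Finset.sum_congr rfl (fun jj _ => hpt jj), Finset.sum_add_distrib,
        Finset.sum_add_distrib, Finset.sum_ite_eq' Finset.univ, Finset.sum_ite_eq' Finset.univ,
        if_pos (Finset.mem_univ _), if_pos (Finset.mem_univ _), h22, zero_add] at h
      exact h
    have hxt : ∀ a : ℕ, (ha : a + 1 < n) →
        x ⟨a+1, by omega⟩ = (if a+1 = 2*l-n-1 then x ⟨2*n-1, by omega⟩ else 0) := by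
      intro a ha
      have h1 := hS a (by omega)
      have h2 := hS (a+1) (by omega)
      have h3 : (∑ jj : Fin (2*n), if a < jj.1 ∧ jj.1 < n then x jj else 0)
          = x ⟨a+1, by omega⟩
            + ∑ jj : Fin (2*n), if a+1 < jj.1 ∧ jj.1 < n then x jj else 0 := by
        have hpt : ∀ jj : Fin (2*n), (if a < jj.1 ∧ jj.1 < n then x jj else 0)
            = (if jj = (⟨a+1, by omega⟩ : Fin (2*n)) then x jj else 0)
              + (if a+1 < jj.1 ∧ jj.1 < n then x jj else 0) := by
          intro jj
          have hj2 := jj.2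
          simp only [Fin.ext_iff, Fin.val_mk]
          split_ifs <;> first | (exfalso; omega) | ring
        rw [Finset.sum_congr rfl (fun jj _ => hpt jj), Finset.sum_add_distrib,
          Finset.sum_ite_eq' Finset.univ, if_pos (Finset.mem_univ _)]
      by_cases hd : a + 1 = 2*l-n-1
      · rw [if_pos hd]
        rw [if_pos (show a ≤ 2*l-n-2 by omega)] at h1
        rw [if_neg (show ¬ a+1 ≤ 2*l-n-2 by omega)] at h2
        linear_combination -h3 + h1 - h2 - (x ⟨2*n-1, by omega⟩) * h20
      · rw [if_neg hd]
        have hBB : (if a ≤ 2*l-n-2 then x (⟨2*n-1, by omega⟩ : Fin (2*n)) else 0)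
            = (if a+1 ≤ 2*l-n-2 then x (⟨2*n-1, by omega⟩ : Fin (2*n)) else 0) := by
          split_ifs <;> first | rfl | (exfalso; omega)
        linear_combination h1 - h2 - h3 - hBB
    rw [Submodule.mem_span_pair]
    refine ⟨x ⟨0, by omega⟩, x ⟨2*n-1, by omega⟩, ?_⟩
    funext m
    have hm2 := m.2
    simp only [Pi.add_apply, Pi.smul_apply, smul_eq_mul, Pi.single_apply, mul_add]
    rcases Nat.eq_zero_or_pos m.1 with hm0 | hm0
    · rw [if_pos (fin_eq' m (by omega) hm0), if_neg (fin_ne' m (by omega) (by omega)),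
        if_neg (fin_ne' m (by omega) (by omega)), fin_eq' m (by omega) hm0]
      ring
    · rw [if_neg (fin_ne' m (by omega) (by omega))]
      rcases Nat.lt_or_ge m.1 n with hmn | hmn
      · have hx1 := hxt (m.1-1) (by omega)
        have hm' : m = ⟨(m.1-1)+1, by omega⟩ := fin_eq' m (by omega) (by omega)
        by_cases hc1 : m.1 = 2*l-n-1
        · rw [if_pos (fin_eq' m (by omega) hc1), if_neg (fin_ne' m (by omega) (by omega))]
          rw [if_pos (by omega)] at hx1
          rw [hm', hx1]
          ring
        · rw [if_neg (fin_ne' m (by omega) hc1), if_neg (fin_ne' m (by omega) (by omega))]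
          rw [if_neg (by omega)] at hx1
          rw [hm', hx1]
          ring
      · by_cases hml : m.1 = 2*n-1
        · rw [if_neg (fin_ne' m (by omega) (by omega)), if_pos (fin_eq' m (by omega) hml),
            fin_eq' m (by omega) hml]
          ring
        · rw [if_neg (fin_ne' m (by omega) (by omega)), if_neg (fin_ne' m (by omega) hml),
            hmid m (by omega) (by omega)]
          ring
  · rw [Submodule.span_le]
    intro y hy
    simp only [Set.mem_insert_iff, Set.mem_singleton_iff] at hy
    have hcol : ∀ c : Fin (2*n), (Um k n l - 1).mulVecLin (Pi.single c (1:k))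
        = fun i => ((Am n l c i : ℕ) : k) := by
      intro c
      rw [Matrix.mulVecLin_apply, Matrix.mulVec_single]
      funext i
      simp only [Pi.smul_apply, MulOpposite.op_one, one_smul]
      exact hN i c
    rcases hy with rfl | rfl
    · rw [SetLike.mem_coe, LinearMap.mem_ker, hcol]
      funext i
      have hi2 := i.2
      have : Am n l (⟨0, by omega⟩ : Fin (2*n)) i = 0 := by
        simp only [Am, Fin.val_mk, true_and, and_true]
        split_ifs <;> omega
      rw [this]
      exact Nat.cast_zero
    · rw [SetLike.mem_coe, LinearMap.mem_ker, map_add, hcol, hcol]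
      funext i
      have hi2 := i.2
      have h1 : Am n l (⟨2*l-n-1, by omega⟩ : Fin (2*n)) i
          = if i.1 ≤ 2*l-n-2 then 1 else 0 := by
        simp only [Am, Fin.val_mk, true_and, and_true]
        split_ifs <;> omega
      have h2 : Am n l (⟨2*n-1, by omega⟩ : Fin (2*n)) i
          = if i.1 ≤ 2*l-n-2 then 1 else 0 := by
        simp only [Am, Fin.val_mk, true_and, and_true]
        split_ifs <;> omega
      show ((Am n l (⟨2*l-n-1, by omega⟩ : Fin (2*n)) i : ℕ) : k)
          + ((Am n l (⟨2*n-1, by omega⟩ : Fin (2*n)) i : ℕ) : k) = 0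
      rw [h1, h2]
      split_ifs
      · push_cast
        linear_combination h20
      · push_cast
        ring

lemma rank_two (hn : 4 ≤ n) (hl1 : n+1 < 2*l) (hl2 : l ≤ n) [CharP k 2] :
    Module.finrank k (LinearMap.ker (Um k n l - 1).mulVecLin) = 2 := by
  have hli : LinearIndependent k
      (![Pi.single (⟨0, by omega⟩ : Fin (2*n)) (1:k),
        Pi.single (⟨2*l-n-1, by omega⟩ : Fin (2*n)) (1:k)
          + Pi.single (⟨2*n-1, by omega⟩ : Fin (2*n)) (1:k)] : Fin 2 → (Fin (2*n) → k)) := by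
    rw [LinearIndependent.pair_iff]
    intro s t hst
    have h0 := congrFun hst ⟨0, by omega⟩
    have h1 := congrFun hst ⟨2*n-1, by omega⟩
    simp only [Pi.add_apply, Pi.smul_apply, smul_eq_mul, Pi.single_apply, Fin.mk.injEq,
      Pi.zero_apply] at h0 h1
    rw [if_pos trivial, if_neg (show ¬ (0 = 2*l-n-1) by omega),
      if_neg (show ¬ (0 = 2*n-1) by omega)] at h0
    rw [if_neg (show ¬ (2*n-1 = 0) by omega), if_neg (show ¬ (2*n-1 = 2*l-n-1) by omega),
      if_pos trivial] at h1
    constructor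
    · linear_combination h0
    · linear_combination h1
  have hr : Set.range (![Pi.single (⟨0, by omega⟩ : Fin (2*n)) (1:k),
        Pi.single (⟨2*l-n-1, by omega⟩ : Fin (2*n)) (1:k)
          + Pi.single (⟨2*n-1, by omega⟩ : Fin (2*n)) (1:k)] : Fin 2 → (Fin (2*n) → k))
      = {Pi.single (⟨0, by omega⟩ : Fin (2*n)) (1:k),
        Pi.single (⟨2*l-n-1, by omega⟩ : Fin (2*n)) (1:k)
          + Pi.single (⟨2*n-1, by omega⟩ : Fin (2*n)) (1:k)} := by
    ext y
    simp only [Set.mem_range, Fin.exists_fin_two, Matrix.cons_val_zero, Matrix.cons_val_one,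
      Matrix.head_cons, Set.mem_insert_iff, Set.mem_singleton_iff]
    tauto
  rw [ker_eq k hn hl1 hl2, ← hr, finrank_span_eq_card hli, Fintype.card_fin]

end SFive

theorem stmt_5 (k : Type*) [Field k] [CharP k 2] (n l : ℕ) (hn : 4 ≤ n)
    (hl1 : n + 1 < 2*l) (hl2 : l ≤ n) :
    let v : Fin (2*n) → (Fin (2*n) → k) := fun i => Pi.single i 1
    let U : Matrix (Fin (2*n)) (Fin (2*n)) k := fun i j =>
      if j.1 < n then (if i.1 ≤ j.1 then 1 else 0)
      else if j.1 = 2*l-2 then (if i.1 = 2*l-2 ∨ i.1 = 2*l-1 ∨ i.1 < n then 1 else 0)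
      else if j.1 = 2*n-1 then (if i.1 = 2*n-1 ∨ i.1 ≤ 2*l-n-2 then 1 else 0)
      else (if i = j ∨ i.1 = j.1+1 then 1 else 0)
    IsUnit U ∧
    LinearMap.ker (U - 1).mulVecLin =
      Submodule.span k {v ⟨0, by omega⟩, v ⟨2*l-n-1, by omega⟩ + v ⟨2*n-1, by omega⟩} ∧
    Module.finrank k (LinearMap.ker (U - 1).mulVecLin) = 2 ∧
    (U - 1) ^ (2*l-2) = 0 ∧
    (U - 1) ^ (2*l-3) ≠ 0 := by
  intro v U
  refine ⟨SFive.unit_um k hn hl1 hl2, SFive.ker_eq k hn hl1 hl2,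
    SFive.rank_two k hn hl1 hl2, SFive.vanish k hn hl1 hl2, SFive.nonvanish k hn hl1 hl2⟩
end

section
/- Let k be a field of characteristic 2 and V a 4-dimensional k-vector space with basis v_1, v_2, v_3, v_4 and alternating form B with B(v_1,v_3) = B(v_3,v_1) = B(v_2,v_4) = B(v_4,v_2) = 1 and zero otherwise. Let e = E_{1,3} + E_{1,2} + E_{4,3} (i.e. e(v_2) = v_1, e(v_3) = v_1 + v_4, and e(v_1) = e(v_4) = 0). Then e ∈ sp(V,B), e^2 = 0, e has rank 2 (two Jordan blocks of size 2), and B(e(v_3), v_3) = 1 while B(e^2(v), e(v)) = 0 for all v ∈ V. -/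
open Matrix

theorem stmt_16 (k : Type*) [Field k] [CharP k 2] :
    let B : (Fin 4 → k) → (Fin 4 → k) → k := fun v w =>
      v ⬝ᵥ ((fun i j : Fin 4 => if i.1 + 2 = j.1 ∨ j.1 + 2 = i.1 then (1:k) else 0) *ᵥ w)
    let e : Matrix (Fin 4) (Fin 4) k :=
      single 0 2 1 + single 0 1 1 + single 3 2 1
    (∀ v w : Fin 4 → k, B (e *ᵥ v) w + B v (e *ᵥ w) = 0) ∧
    e ^ 2 = 0 ∧
    e.rank = 2 ∧
    B (e *ᵥ (Pi.single 2 1)) (Pi.single 2 1) = 1 ∧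
    (∀ v : Fin 4 → k, B ((e ^ 2) *ᵥ v) (e *ᵥ v) = 0) := by
  intro B e
  have h2 : (2 : k) = 0 := by
    have := CharP.cast_eq_zero k 2
    simpa using this
  have he : e = !![0,1,1,0;0,0,0,0;0,0,0,0;0,0,1,0] := by
    show (single 0 2 1 + single 0 1 1 + single 3 2 1 : Matrix (Fin 4) (Fin 4) k) = _
    ext i j
    simp only [Matrix.add_apply, Matrix.single, Matrix.of_apply]
    fin_cases i <;> fin_cases j <;> norm_num [Fin.ext_iff] <;> decide
  have hsq : e ^ 2 = 0 := by
    rw [he]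
    ext i j
    fin_cases i <;> fin_cases j <;>
      simp [pow_two, Matrix.mul_apply, Fin.sum_univ_four] <;> rfl
  refine ⟨?_, hsq, ?_, ?_, ?_⟩
  · intro v w
    show (e *ᵥ v) ⬝ᵥ _ + v ⬝ᵥ _ = 0
    rw [he]
    simp [mulVec, dotProduct, Fin.sum_univ_four, Matrix.vecHead, Matrix.vecTail,
      show ((3:Fin 4):ℕ) = 3 from rfl, show ((2:Fin 4):ℕ) = 2 from rfl,
      show ((1:Fin 4):ℕ) = 1 from rfl, show ((0:Fin 4):ℕ) = 0 from rfl]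
    ring_nf
    simp [h2]
  · show e.rank = 2
    rw [he]
    set M : Matrix (Fin 4) (Fin 4) k := !![0,1,1,0;0,0,0,0;0,0,0,0;0,0,1,0] with hM
    set c1 : Fin 4 → k := ![1,0,0,0] with hc1
    set c2 : Fin 4 → k := ![1,0,0,1] with hc2
    have e0 : Mᵀ 0 = 0 := by ext j; fin_cases j <;> rfl
    have e1 : Mᵀ 1 = c1 := by ext j; fin_cases j <;> rfl
    have e2 : Mᵀ 2 = c2 := by ext j; fin_cases j <;> rfl
    have e3 : Mᵀ 3 = 0 := by ext j; fin_cases j <;> rfl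
    have hspan : Submodule.span k (Set.range Mᵀ) = Submodule.span k (Set.range ![c1, c2]) := by
      apply le_antisymm
      · rw [Submodule.span_le]
        rintro _ ⟨i, rfl⟩
        fin_cases i
        · exact Set.mem_of_eq_of_mem e0 (Submodule.zero_mem _)
        · exact Set.mem_of_eq_of_mem e1 (Submodule.subset_span ⟨0, rfl⟩)
        · exact Set.mem_of_eq_of_mem e2 (Submodule.subset_span ⟨1, rfl⟩)
        · exact Set.mem_of_eq_of_mem e3 (Submodule.zero_mem _)
      · rw [Submodule.span_le]
        rintro _ ⟨i, rfl⟩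
        fin_cases i
        · exact Set.mem_of_eq_of_mem e1.symm (Submodule.subset_span ⟨1, rfl⟩)
        · exact Set.mem_of_eq_of_mem e2.symm (Submodule.subset_span ⟨2, rfl⟩)
    have hli : LinearIndependent k ![c1, c2] := by
      rw [LinearIndependent.pair_iff]
      intro s t hst
      have h0 := congrFun hst 0
      have h3 := congrFun hst 3
      simp [hc1, hc2] at h0 h3
      exact ⟨by simpa [h3] using h0, h3⟩
    rw [Matrix.rank, Matrix.range_mulVecLin, show M.col = Mᵀ from rfl, hspan, finrank_span_eq_card hli]
    simp
  · show (e *ᵥ _) ⬝ᵥ _ = 1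
    rw [he]
    simp [mulVec, dotProduct, Fin.sum_univ_four, Pi.single_apply]
  · intro v
    show ((e ^ 2) *ᵥ v) ⬝ᵥ _ = 0
    rw [hsq]
    simp [mulVec, dotProduct, Fin.sum_univ_four]
end
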